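/- For every K ≥ 0 there exists C ≥ 0 with the following property. Let X ⊆ ℝ^d be a nonempty compact convex set with a base point x₀ ∈ X, let h₀, h₁ : ℝ^d → ℝ^d be C¹ maps with h₀(X) ⊆ X, h₁(X) ⊆ X and sup_{x∈X} ‖Dh_i(x)‖ ≤ K for i = 0,1, let μ⁺ and μ⁻ be finite Borel measures on X, and let φ : ℝ^d → ℝ be C². Then | (∫_X φ∘h₁ dμ⁺ − ∫_X φ∘h₁ dμ⁻) − (∫_X φ∘h₀ dμ⁺ − ∫_X φ∘h₀ dμ⁻) | ≤ C · N_Lip(μ⁺,μ⁻) · ( sup_{x∈X} ‖Dφ(x)‖ + sup_{x∈X} ‖D²φ(x)‖ ) · ( sup_{x∈X} ‖h₁(x) − h₀(x)‖ + sup_{x∈X} ‖Dh₁(x) − Dh₀(x)‖ ), where N_Lip(μ⁺,μ⁻) = sup { |∫_X ψ dμ⁺ − ∫_X ψ dμ⁻| : ψ : X → ℝ Lipschitz with |ψ(x₀)| + Lip(ψ) ≤ 1 } and Lip(ψ) denotes the Lipschitz constant of ψ. -/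

import Mathlib

open MeasureTheory

/-- The Lipschitz-dual distance between two finite Borel measures on `X` (with base
point `x₀`): `N_Lip(μ⁺,μ⁻) = sup { |∫_X ψ dμ⁺ − ∫_X ψ dμ⁻| : ψ Lipschitz on X with
|ψ(x₀)| + Lip(ψ) ≤ 1 }`. -/
noncomputable def NLip {E : Type*} [NormedAddCommGroup E] [MeasurableSpace E]
    (X : Set E) (x₀ : E) (μp μm : Measure E) : ℝ :=
  ⨆ ψ : {ψ : E → ℝ // ∃ c : NNReal, LipschitzOnWith c ψ X ∧ |ψ x₀| + (c : ℝ) ≤ 1},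
    |(∫ x in X, ψ.1 x ∂μp) - ∫ x in X, ψ.1 x ∂μm|

lemma le_biSup_real {E : Type*} {X : Set E} {g : E → ℝ} {M : ℝ}
    (hM : ∀ x ∈ X, g x ≤ M) {x : E} (hx : x ∈ X) :
    g x ≤ ⨆ y ∈ X, g y := by
  have hbdd : BddAbove (Set.range fun y => ⨆ _ : y ∈ X, g y) := by
    refine ⟨max M 0, ?_⟩
    rintro _ ⟨y, rfl⟩
    simp only
    by_cases hy : y ∈ X
    · rw [ciSup_pos (f := fun _ : y ∈ X => g y) hy]
      exact le_max_of_le_left (hM y hy)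
    · haveI : IsEmpty (y ∈ X) := ⟨hy⟩
      rw [Real.iSup_of_isEmpty]
      exact le_max_right _ _
  calc g x = ⨆ _ : x ∈ X, g x := (ciSup_pos (f := fun _ : x ∈ X => g x) hx).symm
    _ ≤ ⨆ y, ⨆ _ : y ∈ X, g y := le_ciSup hbdd x

lemma biSup_nonneg_real {E : Type*} {X : Set E} {g : E → ℝ} {M : ℝ}
    (hM : ∀ x ∈ X, g x ≤ M) (hg : ∀ x ∈ X, 0 ≤ g x) {x : E} (hx : x ∈ X) :
    0 ≤ ⨆ y ∈ X, g y :=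
  le_trans (hg x hx) (le_biSup_real hM hx)

lemma norm_iteratedFDeriv_one' {E F : Type*} [NormedAddCommGroup E] [NormedSpace ℝ E]
    [NormedAddCommGroup F] [NormedSpace ℝ F] (g : E → F) (x : E) :
    ‖iteratedFDeriv ℝ 1 g x‖ = ‖fderiv ℝ g x‖ := by
  rw [← norm_iteratedFDeriv_fderiv (n := 0), norm_iteratedFDeriv_zero]

set_option maxHeartbeats 1000000 in
/-- Lipschitz-dual continuity of the push-forward tested against `C²` observables: for
every `K ≥ 0` there is `C ≥ 0` such that for all compact convex `X ⊆ ℝ^d` with base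
point `x₀ ∈ X`, all `C¹` maps `h₀, h₁` preserving `X` with `sup_X ‖Dh_i‖ ≤ K`, all
finite Borel measures `μ⁺, μ⁻` on `X` and every `C²` function `φ`,
`|⟨(h₁)_*ν − (h₀)_*ν, φ⟩| ≤ C · N_Lip(μ⁺,μ⁻) · (sup_X ‖Dφ‖ + sup_X ‖D²φ‖) ·
(sup_X ‖h₁ − h₀‖ + sup_X ‖Dh₁ − Dh₀‖)` where `ν = μ⁺ − μ⁻`. -/
theorem pushforward_lipschitz_dual_continuity :
    ∀ K : ℝ, 0 ≤ K → ∃ C : ℝ, 0 ≤ C ∧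
      ∀ (d : ℕ) (X : Set (EuclideanSpace ℝ (Fin d))),
        IsCompact X → Convex ℝ X →
        ∀ x₀ ∈ X,
        ∀ h₀ h₁ : EuclideanSpace ℝ (Fin d) → EuclideanSpace ℝ (Fin d),
          ContDiff ℝ 1 h₀ → ContDiff ℝ 1 h₁ →
          Set.MapsTo h₀ X X → Set.MapsTo h₁ X X →
          (∀ x ∈ X, ‖fderiv ℝ h₀ x‖ ≤ K) → (∀ x ∈ X, ‖fderiv ℝ h₁ x‖ ≤ K) →
          ∀ μp μm : Measure (EuclideanSpace ℝ (Fin d)),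
            IsFiniteMeasure μp → IsFiniteMeasure μm → μp Xᶜ = 0 → μm Xᶜ = 0 →
            ∀ φ : EuclideanSpace ℝ (Fin d) → ℝ, ContDiff ℝ 2 φ →
              |((∫ x in X, φ (h₁ x) ∂μp) - ∫ x in X, φ (h₁ x) ∂μm) -
                  ((∫ x in X, φ (h₀ x) ∂μp) - ∫ x in X, φ (h₀ x) ∂μm)|
                ≤ C * NLip X x₀ μp μm *
                    ((⨆ x ∈ X, ‖fderiv ℝ φ x‖) +
                      ⨆ x ∈ X, ‖iteratedFDeriv ℝ 2 φ x‖) *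
                    ((⨆ x ∈ X, ‖h₁ x - h₀ x‖) +
                      ⨆ x ∈ X, ‖fderiv ℝ h₁ x - fderiv ℝ h₀ x‖) := by
  intro K hK
  refine ⟨K + 2, by linarith, ?_⟩
  intro d X hXcomp hXconv x₀ hx₀ h₀ h₁ hh₀ hh₁ hm₀ hm₁ hK₀ hK₁ μp μm hμp hμm hμpc hμmc φ hφ
  haveI := hμp; haveI := hμm
  -- basic differentiability facts
  have hφd : Differentiable ℝ φ := hφ.differentiable two_ne_zero
  have hh₀d : Differentiable ℝ h₀ := hh₀.differentiable one_ne_zero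
  have hh₁d : Differentiable ℝ h₁ := hh₁.differentiable one_ne_zero
  have hφ' : ContDiff ℝ 1 (fderiv ℝ φ) := hφ.fderiv_right (by norm_num)
  have hφ'd : Differentiable ℝ (fderiv ℝ φ) := hφ'.differentiable one_ne_zero
  -- bounds on compact set
  obtain ⟨M₁, hM₁⟩ := hXcomp.exists_bound_of_continuousOn
    ((hφ.continuous_fderiv two_ne_zero).continuousOn)
  obtain ⟨M₂, hM₂⟩ := hXcomp.exists_bound_of_continuousOn
    ((hφ.continuous_iteratedFDeriv (m := 2) (by norm_num)).continuousOn)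
  obtain ⟨M₃, hM₃⟩ := hXcomp.exists_bound_of_continuousOn
    ((hh₁.continuous.sub hh₀.continuous).continuousOn)
  obtain ⟨M₄, hM₄⟩ := hXcomp.exists_bound_of_continuousOn
    (((hh₁.continuous_fderiv one_ne_zero).sub (hh₀.continuous_fderiv one_ne_zero)).continuousOn)
  set S1 : ℝ := ⨆ x ∈ X, ‖fderiv ℝ φ x‖ with hS1def
  set S2 : ℝ := ⨆ x ∈ X, ‖iteratedFDeriv ℝ 2 φ x‖ with hS2def
  set B1 : ℝ := ⨆ x ∈ X, ‖h₁ x - h₀ x‖ with hB1def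
  set B2 : ℝ := ⨆ x ∈ X, ‖fderiv ℝ h₁ x - fderiv ℝ h₀ x‖ with hB2def
  have hS1 : ∀ x ∈ X, ‖fderiv ℝ φ x‖ ≤ S1 := fun x hx =>
    le_biSup_real (g := fun y => ‖fderiv ℝ φ y‖) hM₁ hx
  have hS2 : ∀ x ∈ X, ‖iteratedFDeriv ℝ 2 φ x‖ ≤ S2 := fun x hx =>
    le_biSup_real (g := fun y => ‖iteratedFDeriv ℝ 2 φ y‖) hM₂ hx
  have hB1 : ∀ x ∈ X, ‖h₁ x - h₀ x‖ ≤ B1 := fun x hx =>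
    le_biSup_real (g := fun y => ‖h₁ y - h₀ y‖) hM₃ hx
  have hB2 : ∀ x ∈ X, ‖fderiv ℝ h₁ x - fderiv ℝ h₀ x‖ ≤ B2 := fun x hx =>
    le_biSup_real (g := fun y => ‖fderiv ℝ h₁ y - fderiv ℝ h₀ y‖) hM₄ hx
  have hS1n : 0 ≤ S1 := biSup_nonneg_real hM₁ (fun _ _ => norm_nonneg _) hx₀
  have hS2n : 0 ≤ S2 := biSup_nonneg_real hM₂ (fun _ _ => norm_nonneg _) hx₀
  have hB1n : 0 ≤ B1 := biSup_nonneg_real hM₃ (fun _ _ => norm_nonneg _) hx₀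
  have hB2n : 0 ≤ B2 := biSup_nonneg_real hM₄ (fun _ _ => norm_nonneg _) hx₀
  -- second derivative bound
  have hD2 : ∀ y ∈ X, ‖fderiv ℝ (fderiv ℝ φ) y‖ ≤ S2 := fun y hy => by
    rw [← norm_iteratedFDeriv_one', norm_iteratedFDeriv_fderiv]
    exact hS2 y hy
  -- Lipschitz estimates from the mean value inequality
  have hφLip : ∀ a ∈ X, ∀ b ∈ X, ‖φ b - φ a‖ ≤ S1 * ‖b - a‖ := fun a ha b hb =>
    hXconv.norm_image_sub_le_of_norm_fderiv_le (fun y _ => hφd y) hS1 ha hb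
  have hDφLip : ∀ a ∈ X, ∀ b ∈ X, ‖fderiv ℝ φ b - fderiv ℝ φ a‖ ≤ S2 * ‖b - a‖ :=
    fun a ha b hb =>
      hXconv.norm_image_sub_le_of_norm_fderiv_le (fun y _ => hφ'd y) hD2 ha hb
  -- the function ψ and its derivative
  set ψ : EuclideanSpace ℝ (Fin d) → ℝ := fun x => φ (h₁ x) - φ (h₀ x) with hψdef
  set Dψ : EuclideanSpace ℝ (Fin d) → (EuclideanSpace ℝ (Fin d) →L[ℝ] ℝ) :=
    fun x => ((fderiv ℝ φ (h₁ x)).comp (fderiv ℝ h₁ x)) -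
      ((fderiv ℝ φ (h₀ x)).comp (fderiv ℝ h₀ x)) with hDψdef
  have hψd : ∀ x, HasFDerivAt ψ (Dψ x) x := fun x =>
    ((hφd (h₁ x)).hasFDerivAt.comp x (hh₁d x).hasFDerivAt).sub
      ((hφd (h₀ x)).hasFDerivAt.comp x (hh₀d x).hasFDerivAt)
  set L : ℝ := S2 * B1 * K + S1 * B2 with hLdef
  have hLn : 0 ≤ L :=
    add_nonneg (mul_nonneg (mul_nonneg hS2n hB1n) hK) (mul_nonneg hS1n hB2n)
  have hDψle : ∀ x ∈ X, ‖Dψ x‖ ≤ L := by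
    intro x hx
    have key : Dψ x =
        ((fderiv ℝ φ (h₁ x) - fderiv ℝ φ (h₀ x)).comp (fderiv ℝ h₁ x)) +
          ((fderiv ℝ φ (h₀ x)).comp (fderiv ℝ h₁ x - fderiv ℝ h₀ x)) := by
      ext v
      simp [hDψdef, ContinuousLinearMap.sub_apply, ContinuousLinearMap.comp_apply,
        ContinuousLinearMap.add_apply, map_sub]
    have e1 : ‖fderiv ℝ φ (h₁ x) - fderiv ℝ φ (h₀ x)‖ ≤ S2 * B1 := by
      refine le_trans (hDφLip (h₀ x) (hm₀ hx) (h₁ x) (hm₁ hx)) ?_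
      exact mul_le_mul_of_nonneg_left (hB1 x hx) hS2n
    calc ‖Dψ x‖ ≤ ‖(fderiv ℝ φ (h₁ x) - fderiv ℝ φ (h₀ x)).comp (fderiv ℝ h₁ x)‖ +
          ‖(fderiv ℝ φ (h₀ x)).comp (fderiv ℝ h₁ x - fderiv ℝ h₀ x)‖ := by
          rw [key]; exact norm_add_le _ _
      _ ≤ ‖fderiv ℝ φ (h₁ x) - fderiv ℝ φ (h₀ x)‖ * ‖fderiv ℝ h₁ x‖ +
          ‖fderiv ℝ φ (h₀ x)‖ * ‖fderiv ℝ h₁ x - fderiv ℝ h₀ x‖ :=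
          add_le_add (ContinuousLinearMap.opNorm_comp_le _ _)
            (ContinuousLinearMap.opNorm_comp_le _ _)
      _ ≤ (S2 * B1) * K + S1 * B2 := by
          refine add_le_add ?_ ?_
          · exact mul_le_mul e1 (hK₁ x hx) (norm_nonneg _) (mul_nonneg hS2n hB1n)
          · exact mul_le_mul (hS1 (h₀ x) (hm₀ hx)) (hB2 x hx) (norm_nonneg _) hS1n
      _ = L := rfl
  have hψLip : ∀ a ∈ X, ∀ b ∈ X, ‖ψ b - ψ a‖ ≤ L * ‖b - a‖ := by
    intro a ha b hb
    refine hXconv.norm_image_sub_le_of_norm_fderiv_le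
      (fun y _ => (hψd y).differentiableAt) (fun y hy => ?_) ha hb
    rw [(hψd y).fderiv]
    exact hDψle y hy
  have hψx₀ : |ψ x₀| ≤ S1 * B1 := by
    have h1 := hφLip (h₀ x₀) (hm₀ hx₀) (h₁ x₀) (hm₁ hx₀)
    have h2 : ‖φ (h₁ x₀) - φ (h₀ x₀)‖ = |ψ x₀| := by
      simp [hψdef, Real.norm_eq_abs]
    rw [h2] at h1
    exact le_trans h1 (mul_le_mul_of_nonneg_left (hB1 x₀ hx₀) hS1n)
  set M : ℝ := (K + 2) * (S1 + S2) * (B1 + B2) with hMdef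
  have hMn : 0 ≤ M := by positivity
  have hkey : |ψ x₀| + L ≤ M := by
    rw [hMdef, hLdef]
    nlinarith [mul_nonneg hS1n hB1n, mul_nonneg hS1n hB2n, mul_nonneg hS2n hB1n,
      mul_nonneg hS2n hB2n, mul_nonneg hK (mul_nonneg hS1n hB1n),
      mul_nonneg hK (mul_nonneg hS1n hB2n), mul_nonneg hK (mul_nonneg hS2n hB2n),
      mul_nonneg hK (mul_nonneg hS2n hB1n), hψx₀]
  -- integrability
  have hXm : MeasurableSet X := hXcomp.isClosed.measurableSet
  have hi1p : IntegrableOn (fun x => φ (h₁ x)) X μp :=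
    ((hφ.continuous.comp hh₁.continuous).continuousOn).integrableOn_compact hXcomp
  have hi0p : IntegrableOn (fun x => φ (h₀ x)) X μp :=
    ((hφ.continuous.comp hh₀.continuous).continuousOn).integrableOn_compact hXcomp
  have hi1m : IntegrableOn (fun x => φ (h₁ x)) X μm :=
    ((hφ.continuous.comp hh₁.continuous).continuousOn).integrableOn_compact hXcomp
  have hi0m : IntegrableOn (fun x => φ (h₀ x)) X μm :=
    ((hφ.continuous.comp hh₀.continuous).continuousOn).integrableOn_compact hXcomp
  have hrwp : ∫ x in X, ψ x ∂μp = (∫ x in X, φ (h₁ x) ∂μp) - ∫ x in X, φ (h₀ x) ∂μp :=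
    integral_sub hi1p hi0p
  have hrwm : ∫ x in X, ψ x ∂μm = (∫ x in X, φ (h₁ x) ∂μm) - ∫ x in X, φ (h₀ x) ∂μm :=
    integral_sub hi1m hi0m
  have hLHS : ((∫ x in X, φ (h₁ x) ∂μp) - ∫ x in X, φ (h₁ x) ∂μm) -
      ((∫ x in X, φ (h₀ x) ∂μp) - ∫ x in X, φ (h₀ x) ∂μm) =
      (∫ x in X, ψ x ∂μp) - ∫ x in X, ψ x ∂μm := by
    rw [hrwp, hrwm]; ring
  -- boundedness of the NLip family
  obtain ⟨r, hr⟩ := hXcomp.isBounded.subset_closedBall x₀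
  set R : ℝ := max r 0 with hRdef
  have hRn : 0 ≤ R := le_max_right _ _
  have hmemb : ∀ (ψ₁ : EuclideanSpace ℝ (Fin d) → ℝ) (c : NNReal),
      LipschitzOnWith c ψ₁ X → |ψ₁ x₀| + (c : ℝ) ≤ 1 → ∀ x ∈ X, ‖ψ₁ x‖ ≤ 1 + R := by
    intro ψ₁ c hlip hc x hx
    have hdx : dist x x₀ ≤ R := le_trans (Metric.mem_closedBall.1 (hr hx)) (le_max_left _ _)
    have h1 : dist (ψ₁ x) (ψ₁ x₀) ≤ (c : ℝ) * dist x x₀ := hlip.dist_le_mul x hx x₀ hx₀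
    have hc1 : (c : ℝ) ≤ 1 := le_trans (le_add_of_nonneg_left (abs_nonneg _)) hc
    have hx₀1 : |ψ₁ x₀| ≤ 1 := le_trans (le_add_of_nonneg_right c.coe_nonneg) hc
    have h3 : ‖ψ₁ x‖ ≤ |ψ₁ x₀| + (c : ℝ) * dist x x₀ := by
      calc ‖ψ₁ x‖ = |ψ₁ x| := Real.norm_eq_abs _
        _ ≤ |ψ₁ x₀| + |ψ₁ x - ψ₁ x₀| := by
            have := abs_sub_abs_le_abs_sub (ψ₁ x) (ψ₁ x₀); linarith
        _ ≤ |ψ₁ x₀| + (c : ℝ) * dist x x₀ := by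
            rw [← Real.dist_eq]; exact add_le_add_right h1 _
    have h2 : (c : ℝ) * dist x x₀ ≤ 1 * R :=
      mul_le_mul hc1 hdx dist_nonneg zero_le_one
    linarith
  have hintmem : ∀ (ψ₁ : EuclideanSpace ℝ (Fin d) → ℝ) (c : NNReal),
      LipschitzOnWith c ψ₁ X → |ψ₁ x₀| + (c : ℝ) ≤ 1 →
      |(∫ x in X, ψ₁ x ∂μp) - ∫ x in X, ψ₁ x ∂μm| ≤
        (1 + R) * (μp X).toReal + (1 + R) * (μm X).toReal := by
    intro ψ₁ c hlip hc
    have hp : ‖∫ x in X, ψ₁ x ∂μp‖ ≤ (1 + R) * (μp X).toReal :=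
      norm_setIntegral_le_of_norm_le_const (measure_lt_top μp X)
        (hmemb ψ₁ c hlip hc)
    have hm : ‖∫ x in X, ψ₁ x ∂μm‖ ≤ (1 + R) * (μm X).toReal :=
      norm_setIntegral_le_of_norm_le_const (measure_lt_top μm X)
        (hmemb ψ₁ c hlip hc)
    calc |(∫ x in X, ψ₁ x ∂μp) - ∫ x in X, ψ₁ x ∂μm| ≤
        ‖∫ x in X, ψ₁ x ∂μp‖ + ‖∫ x in X, ψ₁ x ∂μm‖ := abs_sub _ _
      _ ≤ _ := add_le_add hp hm
  have hNbdd : BddAbove (Set.range fun ψ₁ :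
      {ψ₁ : EuclideanSpace ℝ (Fin d) → ℝ //
        ∃ c : NNReal, LipschitzOnWith c ψ₁ X ∧ |ψ₁ x₀| + (c : ℝ) ≤ 1} =>
      |(∫ x in X, ψ₁.1 x ∂μp) - ∫ x in X, ψ₁.1 x ∂μm|) := by
    refine ⟨(1 + R) * (μp X).toReal + (1 + R) * (μm X).toReal, ?_⟩
    rintro _ ⟨⟨ψ₁, c, hlip, hc⟩, rfl⟩
    exact hintmem ψ₁ c hlip hc
  have hNdef : NLip X x₀ μp μm = ⨆ ψ₁ :
      {ψ₁ : EuclideanSpace ℝ (Fin d) → ℝ //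
        ∃ c : NNReal, LipschitzOnWith c ψ₁ X ∧ |ψ₁ x₀| + (c : ℝ) ≤ 1},
      |(∫ x in X, ψ₁.1 x ∂μp) - ∫ x in X, ψ₁.1 x ∂μm| := rfl
  have hN0 : 0 ≤ NLip X x₀ μp μm := by
    have hzlip : LipschitzOnWith 0 (fun _ : EuclideanSpace ℝ (Fin d) => (0:ℝ)) X :=
      (LipschitzWith.const 0).lipschitzOnWith
    have hz1 : |(fun _ : EuclideanSpace ℝ (Fin d) => (0:ℝ)) x₀| + ((0:NNReal) : ℝ) ≤ 1 := by
      norm_num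
    have h := le_ciSup hNbdd ⟨fun _ => (0:ℝ), 0, hzlip, hz1⟩
    rw [hNdef]
    exact le_trans (abs_nonneg _) h
  -- the central estimate
  have hcentral : |(∫ x in X, ψ x ∂μp) - ∫ x in X, ψ x ∂μm| ≤ M * NLip X x₀ μp μm := by
    rcases eq_or_lt_of_le hMn with hM0 | hMpos
    · -- M = 0 : ψ vanishes on X
      have hL0 : L = 0 := le_antisymm (by linarith [abs_nonneg (ψ x₀)]) hLn
      have hψ0 : |ψ x₀| = 0 := le_antisymm (by linarith) (abs_nonneg _)
      have hz : ∀ x ∈ X, ψ x = 0 := by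
        intro x hx
        have h1 := hψLip x₀ hx₀ x hx
        rw [hL0, zero_mul] at h1
        have h2 : ψ x₀ = 0 := abs_eq_zero.1 hψ0
        have h3 : ψ x - ψ x₀ = 0 := norm_le_zero_iff.1 h1
        rw [h2] at h3; linarith
      have hzp : ∫ x in X, ψ x ∂μp = 0 := by
        rw [setIntegral_congr_fun hXm hz, integral_zero]
      have hzm : ∫ x in X, ψ x ∂μm = 0 := by
        rw [setIntegral_congr_fun hXm hz, integral_zero]
      rw [hzp, hzm, ← hM0]
      simp
    · -- M > 0 : rescale ψ
      set ψ' : EuclideanSpace ℝ (Fin d) → ℝ := fun x => ψ x / M with hψ'def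
      have hLMn : 0 ≤ L / M := div_nonneg hLn hMn
      set c : NNReal := Real.toNNReal (L / M) with hcdef
      have hcc : (c : ℝ) = L / M := Real.coe_toNNReal _ hLMn
      have hlip : LipschitzOnWith c ψ' X := by
        refine LipschitzOnWith.of_dist_le_mul ?_
        intro a ha b hb
        rw [hcc]
        have h1 : dist (ψ' a) (ψ' b) = |ψ a - ψ b| / M := by
          rw [Real.dist_eq, hψ'def]
          simp only
          rw [div_sub_div_same, abs_div, abs_of_pos hMpos]
        have h2 : |ψ a - ψ b| ≤ L * dist a b := by
          have h3 := hψLip b hb a ha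
          rwa [Real.norm_eq_abs, ← dist_eq_norm] at h3
        calc dist (ψ' a) (ψ' b) = |ψ a - ψ b| / M := h1
          _ ≤ (L * dist a b) / M := by gcongr
          _ = L / M * dist a b := by ring
      have hmem1 : |ψ' x₀| + (c : ℝ) ≤ 1 := by
        rw [hcc, hψ'def]
        simp only
        rw [abs_div, abs_of_pos hMpos, ← add_div, div_le_one hMpos]
        exact hkey
      have hle : |(∫ x in X, ψ' x ∂μp) - ∫ x in X, ψ' x ∂μm| ≤ NLip X x₀ μp μm := by
        rw [hNdef]
        exact le_ciSup hNbdd ⟨ψ', ⟨c, hlip, hmem1⟩⟩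
      have hip : ∫ x in X, ψ' x ∂μp = (∫ x in X, ψ x ∂μp) / M := by
        rw [hψ'def]; exact integral_div M _
      have him : ∫ x in X, ψ' x ∂μm = (∫ x in X, ψ x ∂μm) / M := by
        rw [hψ'def]; exact integral_div M _
      have habs : |(∫ x in X, ψ x ∂μp) - ∫ x in X, ψ x ∂μm| =
          M * |(∫ x in X, ψ' x ∂μp) - ∫ x in X, ψ' x ∂μm| := by
        rw [hip, him, div_sub_div_same, abs_div, abs_of_pos hMpos]
        field_simp
      rw [habs]
      exact mul_le_mul_of_nonneg_left hle hMn
  rw [hLHS]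
  calc |(∫ x in X, ψ x ∂μp) - ∫ x in X, ψ x ∂μm| ≤ M * NLip X x₀ μp μm := hcentral
    _ = (K + 2) * NLip X x₀ μp μm * (S1 + S2) * (B1 + B2) := by rw [hMdef]; ring
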